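/- arXiv:2006.06519 — 2 statements merged into one kernel-verified Lean document; each statement's English description precedes it below -/
import Mathlib

section
/- Consider the ε-bounded response model: F is a Borel probability measure on [0,1] (value distribution), β : [0,1] → [0,1] is a measurable base-bid function with β(v) ≤ v for all v, z : [0,1] → [0,ε] is measurable, and for a reserve r ∈ (0,1] the bid function is b_r(v) = β(v) if β(v) ≥ r; b_r(v) = r + z(v) if β(v) < r ≤ v; and b_r(v) = 0 if v < r. Define the bidding component E(r) = ∫ max(b_r(v) − r, 0) dF(v). Fix 0 < r⁻ < r⁺ ≤ 1, set δ = r⁺ − r⁻, and define the truncated bid Y(v) = max(b_{r⁻}(v) − r⁻, 0) if b_{r⁻}(v) ≤ r⁺ and Y(v) = δ otherwise. Let V₁,…,Vₙ be i.i.d. with law F and let Ĝ_E = −(Σᵢ₌₁ⁿ Y(Vᵢ))/(n·δ). Then the bias satisfies |E[Ĝ_E] − (E(r⁺) − E(r⁻))/δ| ≤ 2ε/δ, and Var(Ĝ_E) ≤ 1/(4n). -/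
open MeasureTheory ProbabilityTheory Set

/-- Bias and variance of the bid-truncation gradient estimator for the bidding
component under the ε-bounded response model.  The bid function is
`b r v = β v` if `β v ≥ r`, `b r v = r + z v` if `β v < r ≤ v`, and `0` if
`v < r`, with base bid `β v ≤ v` and `z v ∈ [0,ε]`.  With `E r = ∫ max(b r v - r, 0) dF`,
the truncated bid `Y v = max(b r⁻ v - r⁻, 0)` if `b r⁻ v ≤ r⁺` and `Y v = r⁺ - r⁻`
otherwise, and `Ĝ_E = -(∑ᵢ Y(Vᵢ))/(n·(r⁺-r⁻))` for `V₁,…,Vₙ` i.i.d. with law `F`,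
the bias satisfies `|E[Ĝ_E] - (E(r⁺)-E(r⁻))/(r⁺-r⁻)| ≤ 2ε/(r⁺-r⁻)` and
`Var(Ĝ_E) ≤ 1/(4n)`. -/
theorem bid_truncation_eps_bounded_response
    {Ω : Type*} [MeasureSpace Ω] [IsProbabilityMeasure (ℙ : Measure Ω)]
    (F : Measure ℝ) [IsProbabilityMeasure F] (hF : F (Icc (0:ℝ) 1) = 1)
    (ε : ℝ) (hε : 0 ≤ ε)
    (β : ℝ → ℝ) (hβ_meas : Measurable β)
    (hβ_mem : ∀ v ∈ Icc (0:ℝ) 1, β v ∈ Icc (0:ℝ) 1)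
    (hβ_le : ∀ v ∈ Icc (0:ℝ) 1, β v ≤ v)
    (z : ℝ → ℝ) (hz_meas : Measurable z)
    (hz : ∀ v ∈ Icc (0:ℝ) 1, z v ∈ Icc 0 ε)
    (b : ℝ → ℝ → ℝ)
    (hb : ∀ r ∈ Ioc (0:ℝ) 1, ∀ v,
      b r v = if r ≤ β v then β v else if r ≤ v then r + z v else 0)
    (rm rp : ℝ) (hrm : 0 < rm) (hlt : rm < rp) (hrp : rp ≤ 1)
    (E : ℝ → ℝ) (hE : ∀ r, E r = ∫ v, max (b r v - r) 0 ∂F)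
    (Y : ℝ → ℝ)
    (hY : ∀ v, Y v = if b rm v ≤ rp then max (b rm v - rm) 0 else rp - rm)
    (n : ℕ) (hn : 0 < n)
    (V : Fin n → Ω → ℝ) (hV : ∀ i, Measurable (V i))
    (hindep : iIndepFun V ℙ)
    (hlaw : ∀ i, Measure.map (V i) ℙ = F)
    (G : Ω → ℝ) (hG : ∀ ω, G ω = -(∑ i : Fin n, Y (V i ω)) / (n * (rp - rm))) :
    |(∫ ω, G ω ∂ℙ) - (E rp - E rm) / (rp - rm)| ≤ 2 * ε / (rp - rm)
      ∧ variance G ℙ ≤ 1 / (4 * n) := by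
  set δ : ℝ := rp - rm with hδdef
  have hδ : 0 < δ := by simp [hδdef]; linarith
  have hnR : (0:ℝ) < n := by exact_mod_cast hn
  have hrm_mem : rm ∈ Ioc (0:ℝ) 1 := ⟨hrm, by linarith⟩
  have hrp_mem : rp ∈ Ioc (0:ℝ) 1 := ⟨by linarith, hrp⟩
  have hbrm : ∀ v, b rm v = if rm ≤ β v then β v else if rm ≤ v then rm + z v else 0 :=
    hb rm hrm_mem
  have hbrp : ∀ v, b rp v = if rp ≤ β v then β v else if rp ≤ v then rp + z v else 0 :=
    hb rp hrp_mem
  -- measurability of the bid functions and Y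
  have hgm : Measurable (fun v => b rm v) := by
    have : (fun v => b rm v) =
        fun v => if rm ≤ β v then β v else if rm ≤ v then rm + z v else 0 :=
      funext hbrm
    rw [this]
    exact Measurable.ite (measurableSet_le measurable_const hβ_meas) hβ_meas
      (Measurable.ite (measurableSet_le measurable_const measurable_id)
        (measurable_const.add hz_meas) measurable_const)
  have hgp : Measurable (fun v => b rp v) := by
    have : (fun v => b rp v) =
        fun v => if rp ≤ β v then β v else if rp ≤ v then rp + z v else 0 :=
      funext hbrp
    rw [this]
    exact Measurable.ite (measurableSet_le measurable_const hβ_meas) hβ_meas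
      (Measurable.ite (measurableSet_le measurable_const measurable_id)
        (measurable_const.add hz_meas) measurable_const)
  have hYmeas : Measurable Y := by
    have : Y = fun v => if b rm v ≤ rp then max (b rm v - rm) 0 else rp - rm :=
      funext hY
    rw [this]
    exact Measurable.ite (measurableSet_le hgm measurable_const)
      ((hgm.sub measurable_const).max measurable_const) measurable_const
  -- Y is bounded in [0, δ] everywhere
  have hYmem : ∀ v, Y v ∈ Icc (0:ℝ) δ := by
    intro v
    rw [hY v]
    split_ifs with h
    · exact ⟨le_max_right _ _, max_le (by linarith) hδ.le⟩
    · exact ⟨hδ.le, le_refl _⟩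
  -- a.e. membership in [0,1]
  have hae : ∀ᵐ v ∂F, v ∈ Icc (0:ℝ) 1 := by
    have hc : F (Icc (0:ℝ) 1)ᶜ = 0 := by
      rw [measure_compl measurableSet_Icc (measure_ne_top F _), hF, measure_univ, tsub_self]
    rw [ae_iff]
    convert hc using 2
    rfl
  -- key pointwise bias bound
  have key : ∀ v ∈ Icc (0:ℝ) 1,
      |max (b rp v - rp) 0 - max (b rm v - rm) 0 + Y v| ≤ 2 * ε := by
    intro v hv
    have hzv := hz v hv
    have hβv := hβ_le v hv
    have hβm := hβ_mem v hv
    have hz0 := hzv.1; have hz1 := hzv.2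
    have hβ0 := hβm.1; have hβ1 := hβm.2
    rw [hY v, hbrm v, hbrp v]
    rcases le_or_gt rm (β v) with c1 | c1
    · rw [if_pos c1]
      have hB : max (β v - rm) 0 = β v - rm := max_eq_left (by linarith)
      rcases le_or_gt rp (β v) with c2 | c2
      · rw [if_pos c2, hB, max_eq_left (by linarith : (0:ℝ) ≤ β v - rp)]
        rcases le_or_gt (β v) rp with c5 | c5
        · rw [if_pos c5, abs_le]; constructor <;> linarith
        · rw [if_neg (not_le.mpr c5), abs_le]; constructor <;> linarith
      · rw [if_neg (not_le.mpr c2), if_pos c2.le, hB]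
        rcases le_or_gt rp v with c4 | c4
        · rw [if_pos c4]
          have : rp + z v - rp = z v := by ring
          rw [this, max_eq_left hzv.1, abs_le]
          constructor <;> linarith
        · rw [if_neg (not_le.mpr c4), max_eq_right (by linarith : (0:ℝ) - rp ≤ 0), abs_le]
          constructor <;> linarith
    · rw [if_neg (not_le.mpr c1), if_neg (not_le.mpr (lt_of_lt_of_le c1 hlt.le))]
      rcases le_or_gt rm v with c3 | c3
      · rw [if_pos c3]
        have hzz : rm + z v - rm = z v := by ring
        have hB : max (rm + z v - rm) 0 = z v := by rw [hzz, max_eq_left hzv.1]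
        rcases le_or_gt rp v with c4 | c4
        · rw [if_pos c4]
          have hA : max (rp + z v - rp) 0 = z v := by
            rw [(by ring : rp + z v - rp = z v), max_eq_left hzv.1]
          rw [hA]
          rcases le_or_gt (rm + z v) rp with c5 | c5
          · rw [if_pos c5, hB, abs_le]; constructor <;> linarith
          · rw [if_neg (not_le.mpr c5), hB, abs_le]; constructor <;> linarith
        · rw [if_neg (not_le.mpr c4), max_eq_right (by linarith : (0:ℝ) - rp ≤ 0)]
          rcases le_or_gt (rm + z v) rp with c5 | c5
          · rw [if_pos c5, hB, abs_le]; constructor <;> linarith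
          · rw [if_neg (not_le.mpr c5), hB, abs_le]; constructor <;> linarith
      · rw [if_neg (not_le.mpr c3), if_neg (not_le.mpr (c3.trans hlt)),
          if_pos (by linarith : (0:ℝ) ≤ rp),
          max_eq_right (by linarith : (0:ℝ) - rp ≤ 0),
          max_eq_right (by linarith : (0:ℝ) - rm ≤ 0), abs_le]
        constructor <;> linarith
  -- integrability of the three functions under F
  have hintY : Integrable Y F := by
    refine (integrable_const δ).mono' hYmeas.aestronglyMeasurable ?_
    filter_upwards with v
    rw [Real.norm_eq_abs, abs_of_nonneg (hYmem v).1]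
    exact (hYmem v).2
  have hintA : Integrable (fun v => max (b rp v - rp) 0) F := by
    refine (integrable_const (1 + ε)).mono'
      ((hgp.sub measurable_const).max measurable_const).aestronglyMeasurable ?_
    filter_upwards [hae] with v hv
    have hβm := hβ_mem v hv
    have hzv := hz v hv
    have hz0 := hzv.1; have hz1 := hzv.2
    have hβ0 := hβm.1; have hβ1 := hβm.2
    rw [Real.norm_eq_abs, abs_of_nonneg (le_max_right _ _)]
    rw [hbrp v]
    split_ifs <;> (apply max_le <;> linarith)
  have hintB : Integrable (fun v => max (b rm v - rm) 0) F := by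
    refine (integrable_const (1 + ε)).mono'
      ((hgm.sub measurable_const).max measurable_const).aestronglyMeasurable ?_
    filter_upwards [hae] with v hv
    have hβm := hβ_mem v hv
    have hzv := hz v hv
    have hz0 := hzv.1; have hz1 := hzv.2
    have hβ0 := hβm.1; have hβ1 := hβm.2
    rw [Real.norm_eq_abs, abs_of_nonneg (le_max_right _ _)]
    rw [hbrm v]
    split_ifs <;> (apply max_le <;> linarith)
  -- the integral bias bound
  have hbias : |E rp - E rm + ∫ v, Y v ∂F| ≤ 2 * ε := by
    have h2 : (∫ v, (max (b rp v - rp) 0 - max (b rm v - rm) 0) ∂F)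
        = (∫ v, max (b rp v - rp) 0 ∂F) - ∫ v, max (b rm v - rm) 0 ∂F :=
      integral_sub hintA hintB
    have h1 : (∫ v, (max (b rp v - rp) 0 - max (b rm v - rm) 0 + Y v) ∂F)
        = (∫ v, (max (b rp v - rp) 0 - max (b rm v - rm) 0) ∂F) + ∫ v, Y v ∂F :=
      integral_add (hintA.sub hintB) hintY
    have hsum : E rp - E rm + ∫ v, Y v ∂F
        = ∫ v, (max (b rp v - rp) 0 - max (b rm v - rm) 0 + Y v) ∂F := by
      rw [hE rp, hE rm, h1, h2]
    rw [hsum]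
    have := norm_integral_le_of_norm_le_const (μ := F)
      (f := fun v => max (b rp v - rp) 0 - max (b rm v - rm) 0 + Y v) (C := 2 * ε) ?_
    · rw [measureReal_def, measure_univ, ENNReal.toReal_one, mul_one] at this
      exact this
    · filter_upwards [hae] with v hv
      rw [Real.norm_eq_abs]
      exact key v hv
  -- expectation of Y ∘ V i
  have hYVi : ∀ i : Fin n, ∫ ω, Y (V i ω) ∂ℙ = ∫ v, Y v ∂F := by
    intro i
    rw [← hlaw i, integral_map (hV i).aemeasurable hYmeas.aestronglyMeasurable]
  have hintYVi : ∀ i : Fin n, Integrable (fun ω => Y (V i ω)) ℙ := by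
    intro i
    refine (integrable_const δ).mono' (hYmeas.comp (hV i)).aestronglyMeasurable ?_
    filter_upwards with ω
    rw [Real.norm_eq_abs, abs_of_nonneg (hYmem _).1]
    exact (hYmem _).2
  -- expectation of G
  have hGform : G = fun ω => (-1 / (n * δ)) * ∑ i : Fin n, Y (V i ω) := by
    funext ω; rw [hG ω]; ring
  have hEG : ∫ ω, G ω ∂ℙ = -(∫ v, Y v ∂F) / δ := by
    rw [hGform]
    rw [integral_const_mul, integral_finset_sum _ (fun i _ => hintYVi i)]
    simp only [hYVi]
    rw [Finset.sum_const, Finset.card_univ, Fintype.card_fin, nsmul_eq_mul]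
    field_simp
  constructor
  · rw [hEG]
    have heq : -(∫ v, Y v ∂F) / δ - (E rp - E rm) / δ
        = -((E rp - E rm + ∫ v, Y v ∂F)) / δ := by ring
    rw [heq, abs_div, abs_neg, abs_of_pos hδ]
    gcongr
  · -- variance bound
    rw [hGform, variance_const_mul]
    have hmem2 : ∀ i : Fin n, MemLp (fun ω => Y (V i ω)) 2 ℙ := by
      intro i
      exact memLp_of_bounded (Filter.Eventually.of_forall fun ω => hYmem (V i ω))
        (hYmeas.comp (hV i)).aestronglyMeasurable 2
    have hvsum : variance (∑ i : Fin n, fun ω => Y (V i ω)) ℙ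
        = ∑ i : Fin n, variance (fun ω => Y (V i ω)) ℙ := by
      refine IndepFun.variance_sum (fun i _ => hmem2 i) ?_
      intro i _ j _ hij
      exact (hindep.indepFun hij).comp hYmeas hYmeas
    have hvar_le : ∀ i : Fin n, variance (fun ω => Y (V i ω)) ℙ ≤ (δ / 2) ^ 2 := by
      intro i
      have := variance_le_sq_of_bounded (μ := ℙ)
        (Filter.Eventually.of_forall fun ω => hYmem (V i ω))
        (hYmeas.comp (hV i)).aemeasurable
      simpa using this
    have hsumfun : (fun ω => ∑ i : Fin n, Y (V i ω))
        = ∑ i : Fin n, fun ω => Y (V i ω) := by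
      funext ω; simp
    rw [hsumfun, hvsum]
    have hsum_le : ∑ i : Fin n, variance (fun ω => Y (V i ω)) ℙ ≤ (n:ℝ) * (δ / 2) ^ 2 := by
      calc ∑ i : Fin n, variance (fun ω => Y (V i ω)) ℙ
          ≤ ∑ _i : Fin n, (δ / 2) ^ 2 := Finset.sum_le_sum fun i _ => hvar_le i
        _ = (n:ℝ) * (δ / 2) ^ 2 := by
            rw [Finset.sum_const, Finset.card_univ, Fintype.card_fin, nsmul_eq_mul]
    have hn0 : (n:ℝ) ≠ 0 := ne_of_gt hnR
    have hδ0 : rp - rm ≠ 0 := by linarith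
    have hfinal : (-1 / ((n:ℝ) * δ)) ^ 2 * ((n:ℝ) * (δ / 2) ^ 2) = 1 / (4 * (n:ℝ)) := by
      rw [hδdef]
      field_simp
      ring
    exact le_trans (mul_le_mul_of_nonneg_left hsum_le (sq_nonneg _)) (le_of_eq hfinal)
end

section
/- Let μ : ℝ → ℝ be differentiable with L-Lipschitz derivative, let C ⊆ ℝ be a nonempty closed convex set, r ∈ C, α > 0, and Ĝ ∈ ℝ. Let Π_C denote the metric projection onto C, set r′ = Π_C(r + α·Ĝ), and define the gradient mapping P_C(r, g, α) = (Π_C(r + α·g) − r)/α. Then α·(P_C(r, Ĝ, α))² ≤ 2·(μ(r′) − μ(r)) + α·(Ĝ − μ′(r))² + L·α²·Ĝ². -/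
lemma descent_lemma_aux (μ μ' : ℝ → ℝ) (L : ℝ)
    (hderiv : ∀ x, HasDerivAt μ (μ' x) x)
    (hlip : ∀ x y, |μ' x - μ' y| ≤ L * |x - y|)
    (a b : ℝ) :
    μ' a * (b - a) - L / 2 * (b - a) ^ 2 ≤ μ b - μ a := by
  set d := b - a with hd
  set h : ℝ → ℝ := fun t => μ (a + t * d) - t * (μ' a * d) + t ^ 2 * (L / 2 * d ^ 2) with hh
  have hder : ∀ t : ℝ, HasDerivAt h
      ((μ' (a + t * d) - μ' a) * d + t * (L * d ^ 2)) t := by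
    intro t
    have h1 : HasDerivAt (fun t : ℝ => a + t * d) (1 * d) t :=
      ((hasDerivAt_id t).mul_const d).const_add a
    have h2 : HasDerivAt (fun t : ℝ => μ (a + t * d)) (μ' (a + t * d) * (1 * d)) t :=
      (hderiv (a + t * d)).comp t h1
    have h3 : HasDerivAt (fun t : ℝ => t * (μ' a * d)) (μ' a * d) t := by
      simpa using (hasDerivAt_id t).mul_const (μ' a * d)
    have h4 : HasDerivAt (fun t : ℝ => t ^ 2 * (L / 2 * d ^ 2)) (2 * t * (L / 2 * d ^ 2)) t := by
      simpa using (hasDerivAt_pow 2 t).mul_const (L / 2 * d ^ 2)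
    have := (h2.sub h3).add h4
    exact this.congr_deriv (by ring)
  have hmono : MonotoneOn h (Set.Icc (0:ℝ) 1) := by
    apply monotoneOn_of_deriv_nonneg (convex_Icc 0 1)
    · exact fun t _ => (hder t).continuousAt.continuousWithinAt
    · exact fun t _ => ((hder t).differentiableAt).differentiableWithinAt
    · intro t ht
      rw [interior_Icc] at ht
      rw [(hder t).deriv]
      have habs : |μ' (a + t * d) - μ' a| ≤ L * (t * |d|) := by
        have := hlip (a + t * d) a
        simpa [abs_mul, abs_of_pos ht.1, mul_assoc] using this
      have h1 : (μ' (a + t * d) - μ' a) * d ≥ -(L * (t * |d|)) * |d| := by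
        have h2 : (μ' (a + t * d) - μ' a) * d ≥ -(|μ' (a + t * d) - μ' a| * |d|) := by
          rw [← abs_mul]
          exact neg_abs_le _
        have h3 : |μ' (a + t * d) - μ' a| * |d| ≤ L * (t * |d|) * |d| :=
          mul_le_mul_of_nonneg_right habs (abs_nonneg d)
        linarith
      have h4 : -(L * (t * |d|)) * |d| = -(L * t * d ^ 2) := by
        have h5 : |d| * |d| = d ^ 2 := by rw [← abs_mul, sq, abs_mul_self]
        linear_combination (-(L * t)) * h5
      rw [h4] at h1
      nlinarith [h1]
  have := hmono (Set.mem_Icc.2 ⟨le_refl 0, zero_le_one⟩) (Set.mem_Icc.2 ⟨zero_le_one, le_refl 1⟩) zero_le_one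
  simp only [hh] at this
  norm_num at this
  have hb : a + d = b := by rw [hd]; ring
  rw [hb] at this
  linarith

/-- For `L`-smooth `μ`, a nonempty closed convex `C ⊆ ℝ`, `r ∈ C`, step size
`α > 0`, gradient estimate `Ĝ`, projected update `r' = Π_C(r + α·Ĝ)` and
gradient mapping `P_C(r, g, α) = (Π_C(r + α·g) - r)/α`, we have
`α·(P_C(r, Ĝ, α))² ≤ 2·(μ(r') - μ(r)) + α·(Ĝ - μ'(r))² + L·α²·Ĝ²`. -/
theorem projected_gradient_ascent_bound
    (μ μ' : ℝ → ℝ) (L : ℝ)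
    (hderiv : ∀ x, HasDerivAt μ (μ' x) x)
    (hlip : ∀ x y, |μ' x - μ' y| ≤ L * |x - y|)
    (C : Set ℝ) (hne : C.Nonempty) (hclosed : IsClosed C) (hconv : Convex ℝ C)
    (proj : ℝ → ℝ)
    (hmem : ∀ x, proj x ∈ C)
    (hmin : ∀ x, ∀ y ∈ C, |x - proj x| ≤ |x - y|)
    (r : ℝ) (hr : r ∈ C) (α : ℝ) (hα : 0 < α) (G : ℝ)
    (r' : ℝ) (hr' : r' = proj (r + α * G))
    (P : ℝ → ℝ) (hP : ∀ g, P g = (proj (r + α * g) - r) / α) :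
    α * (P G) ^ 2 ≤ 2 * (μ r' - μ r) + α * (G - μ' r) ^ 2 + L * α ^ 2 * G ^ 2 := by
  have hL : 0 ≤ L := by
    have := hlip 0 1
    have h0 := abs_nonneg (μ' 0 - μ' 1)
    norm_num at this
    linarith
  set d : ℝ := r' - r with hdd
  -- variational inequality: d^2 ≤ α * G * d
  have hvar : d ^ 2 ≤ α * G * d := by
    by_contra hcon
    push_neg at hcon
    have hd0 : d ≠ 0 := by
      intro h0
      rw [h0] at hcon
      simp at hcon
    have hdsq : (0:ℝ) < d ^ 2 := by positivity
    set ε : ℝ := d ^ 2 - α * G * d with hε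
    have hε0 : 0 < ε := by simp only [hε]; linarith
    set t : ℝ := min 1 (ε / d ^ 2) with ht
    have ht0 : 0 < t := lt_min one_pos (div_pos hε0 hdsq)
    have ht1 : t ≤ 1 := min_le_left _ _
    -- z = r' + t*(r - r') ∈ C
    have hz : r' + t * (r - r') ∈ C := by
      have h5 := hconv (hmem (r + α * G)) hr (a := 1 - t) (b := t) (by linarith) (le_of_lt ht0) (by ring)
      have h6 : r' + t * (r - r') = (1 - t) • proj (r + α * G) + t • r := by
        rw [smul_eq_mul, smul_eq_mul, ← hr']; ring
      rw [h6]; exact h5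
    have hineq := hmin (r + α * G) _ hz
    rw [← hr'] at hineq
    have hsq : (r + α * G - r') ^ 2 ≤ (r + α * G - (r' + t * (r - r'))) ^ 2 := by
      have h1 := sq_abs (r + α * G - r')
      have h2 := sq_abs (r + α * G - (r' + t * (r - r')))
      nlinarith [hineq, abs_nonneg (r + α * G - r'), abs_nonneg (r + α * G - (r' + t * (r - r')))]
    -- expand: 2t(αG - d)(-d) ≤ ... gives 2(d² - αGd) ≤ t d²
    have hsq' : (α * G - d) ^ 2 ≤ (α * G - d + t * d) ^ 2 := by
      calc (α * G - d) ^ 2 = (r + α * G - r') ^ 2 := by rw [hdd]; ring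
        _ ≤ (r + α * G - (r' + t * (r - r'))) ^ 2 := hsq
        _ = (α * G - d + t * d) ^ 2 := by rw [hdd]; ring
    have hkey : 2 * ε ≤ t * d ^ 2 := by nlinarith [hsq', ht0, mul_pos ht0 ht0]
    have htd : t * d ^ 2 ≤ ε := by
      calc t * d ^ 2 ≤ (ε / d ^ 2) * d ^ 2 :=
            mul_le_mul_of_nonneg_right (min_le_right _ _) (le_of_lt hdsq)
        _ = ε := by field_simp
    linarith
  have hdesc : μ' r * d - L / 2 * d ^ 2 ≤ μ r' - μ r := by
    have := descent_lemma_aux μ μ' L hderiv hlip r r'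
    simpa [hdd] using this
  have hd2 : d ^ 2 ≤ α ^ 2 * G ^ 2 := by nlinarith [sq_nonneg (α * G - d)]
  have hPG : P G = d / α := by rw [hP, ← hr']
  clear_value d
  rw [hPG, div_pow]
  have key : d ^ 2 ≤ 2 * α * (μ r' - μ r) + α ^ 2 * (G - μ' r) ^ 2 + L * α ^ 3 * G ^ 2 := by
    nlinarith [sq_nonneg (α * (G - μ' r) - d),
      mul_le_mul_of_nonneg_left (mul_le_mul_of_nonneg_left hd2 hL) (le_of_lt hα),
      mul_le_mul_of_nonneg_left hdesc (le_of_lt hα), hvar]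
  have expand : α * (d ^ 2 / α ^ 2) = d ^ 2 / α := by field_simp
  rw [expand, div_le_iff₀ hα]
  nlinarith [key]
end
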